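/- Let x be a CE fixed point for λ ∈ (0,1). Then: (i) for all t > 0, ρ < x(t) < 1; and (ii) for all t ≥ 0, −1 < x'(t) < 0. -/

import Mathlib

open MeasureTheory

/-- Generating function ψ(x) = Σ_{k≥0} P(k) x^k. -/
noncomputable def genFun (P : ℕ → ℝ) (x : ℝ) : ℝ := ∑' k : ℕ, P k * x ^ k

/-- Context: P is a probability distribution on ℕ with mean d ∈ (1,∞), and ρ ∈ [0,1)
is the smallest fixed point of its generating function on [0,1]. -/
structure CEContext (P : ℕ → ℝ) (d ρ : ℝ) : Prop where
  P_nonneg : ∀ k, 0 ≤ P k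
  P_sum_one : ∑' k : ℕ, P k = 1
  mean_summable : Summable (fun k : ℕ => (k : ℝ) * P k)
  mean_eq : ∑' k : ℕ, (k : ℝ) * P k = d
  d_gt_one : 1 < d
  rho_nonneg : 0 ≤ ρ
  rho_lt_one : ρ < 1
  rho_fixed : genFun P ρ = ρ
  rho_least : ∀ y : ℝ, 0 ≤ y → y ≤ 1 → genFun P y = y → ρ ≤ y

/-- A CE fixed point for infection rate λ ∈ (0,1): x : [0,∞) → [0,1] non-increasing,
x(0) = 1, x(t) → ρ, and
x(t) = e^{−λt} + λ e^{−λt} ∫₀ᵗ e^{(λ+1)u} (∫_u^∞ ψ(x(s)) e^{−s} ds) du. -/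
def IsCEFixedPoint (P : ℕ → ℝ) (ρ lam : ℝ) (x : ℝ → ℝ) : Prop :=
  (∀ t, 0 ≤ t → x t ∈ Set.Icc (0 : ℝ) 1) ∧
  AntitoneOn x (Set.Ici 0) ∧
  x 0 = 1 ∧
  Filter.Tendsto x Filter.atTop (nhds ρ) ∧
  (∀ t, 0 ≤ t →
    x t = Real.exp (-(lam * t)) + lam * Real.exp (-(lam * t)) *
      ∫ u in (0:ℝ)..t, Real.exp ((lam + 1) * u) *
        ∫ s in Set.Ioi u, genFun P (x s) * Real.exp (-s))

section auxPsi
open Set Real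
variable {P : ℕ → ℝ} (hP : ∀ k, 0 ≤ P k) (hsum : Summable P)
include hP hsum

lemma genFun_summable {y : ℝ} (h0 : 0 ≤ y) (h1 : y ≤ 1) :
    Summable (fun k : ℕ => P k * y ^ k) := by
  refine Summable.of_nonneg_of_le (fun k => mul_nonneg (hP k) (pow_nonneg h0 k))
    (fun k => ?_) hsum
  have : y ^ k ≤ 1 := pow_le_one₀ h0 h1
  nlinarith [hP k, pow_nonneg h0 k]

lemma genFun_mono {a b : ℝ} (h0 : 0 ≤ a) (hab : a ≤ b) (h1 : b ≤ 1) :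
    genFun P a ≤ genFun P b := by
  refine Summable.tsum_le_tsum (fun k => ?_) (genFun_summable hP hsum h0 (hab.trans h1))
    (genFun_summable hP hsum (h0.trans hab) h1)
  exact mul_le_mul_of_nonneg_left (pow_le_pow_left₀ h0 hab k) (hP k)

omit hsum in
lemma genFun_nonneg {y : ℝ} (h0 : 0 ≤ y) : 0 ≤ genFun P y :=
  tsum_nonneg (fun k => mul_nonneg (hP k) (pow_nonneg h0 k))

omit hP hsum in
lemma genFun_one (hone : ∑' k : ℕ, P k = 1) : genFun P 1 = 1 := by
  simpa [genFun] using hone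

/-- chord bound: ψ(y) ≤ y on [ρ, 1] when ψ(ρ)=ρ, ψ(1)=1. -/
lemma genFun_le_self {ρ y : ℝ} (hρ0 : 0 ≤ ρ) (hρ1 : ρ < 1) (hfix : genFun P ρ = ρ)
    (hone : ∑' k : ℕ, P k = 1) (hy0 : ρ ≤ y) (hy1 : y ≤ 1) : genFun P y ≤ y := by
  set θ : ℝ := (y - ρ) / (1 - ρ) with hθ
  have h1ρ : 0 < 1 - ρ := by linarith
  have hθ0 : 0 ≤ θ := div_nonneg (by linarith) h1ρ.le
  have hθ1 : θ ≤ 1 := by rw [div_le_one h1ρ]; linarith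
  have hy : y = (1 - θ) * ρ + θ * 1 := by
    have h := div_mul_cancel₀ (y - ρ) h1ρ.ne'; rw [← hθ] at h; linarith
  have hterm : ∀ k : ℕ, P k * y ^ k ≤ (1 - θ) * (P k * ρ ^ k) + θ * P k := by
    intro k
    have hconv := (convexOn_pow (𝕜 := ℝ) k).2 (mem_Ici.2 hρ0) (mem_Ici.2 zero_le_one)
      (by linarith : (0:ℝ) ≤ 1 - θ) hθ0 (by ring)
    simp only [smul_eq_mul] at hconv
    rw [← hy] at hconv
    have := mul_le_mul_of_nonneg_left hconv (hP k)
    exact this.trans_eq (by ring)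
  have hs1 : Summable (fun k : ℕ => P k * y ^ k) :=
    genFun_summable hP hsum (hρ0.trans hy0) hy1
  have hs2 : Summable (fun k : ℕ => (1 - θ) * (P k * ρ ^ k) + θ * P k) :=
    ((genFun_summable hP hsum hρ0 hρ1.le).mul_left _).add (hsum.mul_left _)
  have := Summable.tsum_le_tsum hterm hs1 hs2
  calc genFun P y ≤ ∑' k : ℕ, ((1 - θ) * (P k * ρ ^ k) + θ * P k) := this
    _ = (1 - θ) * genFun P ρ + θ * (∑' k : ℕ, P k) := by
        rw [Summable.tsum_add ((genFun_summable hP hsum hρ0 hρ1.le).mul_left _) (hsum.mul_left _),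
          tsum_mul_left, tsum_mul_left]; rfl
    _ = y := by rw [hfix, hone]; linarith [hy]

end auxPsi

/-- interval integral of an exponential. -/
lemma integral_exp_mul_aux {c : ℝ} (hc : c ≠ 0) (a b : ℝ) :
    ∫ u in a..b, Real.exp (c * u) = (Real.exp (c * b) - Real.exp (c * a)) / c := by
  open intervalIntegral in
  rw [integral_comp_mul_left (fun u => Real.exp u) hc, integral_exp, smul_eq_mul]
  field_simp

/-- for a CE fixed point, ρ < x(t) < 1 for all t > 0, and
−1 < x'(t) < 0 for all t ≥ 0. -/
theorem ce_fixed_point_strict_bounds {P : ℕ → ℝ} {d ρ : ℝ} (hctx : CEContext P d ρ)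
    {lam : ℝ} (hlam0 : 0 < lam) (hlam1 : lam < 1)
    {x : ℝ → ℝ} (hx : IsCEFixedPoint P ρ lam x) :
    (∀ t, 0 < t → ρ < x t ∧ x t < 1) ∧
    (∀ t, 0 ≤ t →
      -1 < derivWithin x (Set.Ici 0) t ∧ derivWithin x (Set.Ici 0) t < 0) := by
  classical
  open Set Real in
  obtain ⟨hmem, hanti, hx0, hlim, heq⟩ := hx
  have hP := hctx.P_nonneg
  have hρ0 := hctx.rho_nonneg
  have hρ1 := hctx.rho_lt_one
  have hfix := hctx.rho_fixed
  have hone := hctx.P_sum_one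
  have hsum : Summable P := by
    by_contra h
    rw [tsum_eq_zero_of_not_summable h] at hone
    norm_num at hone
  -- basic facts about x
  have hx0' : ∀ s : ℝ, 0 ≤ s → 0 ≤ x s := fun s hs => (hmem s hs).1
  have hx1 : ∀ s : ℝ, 0 ≤ s → x s ≤ 1 := fun s hs => (hmem s hs).2
  have hxρ : ∀ s : ℝ, 0 ≤ s → ρ ≤ x s := by
    intro s hs
    refine le_of_tendsto hlim ?_
    exact Filter.eventually_atTop.2 ⟨s, fun b hb => hanti hs (hs.trans hb) hb⟩
  -- the auxiliary function g
  set g : ℝ → ℝ := fun s => genFun P (x (max s 0)) with hgdef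
  have hmax : ∀ s : ℝ, (0:ℝ) ≤ max s 0 := fun s => le_max_right _ _
  have hg_eq : ∀ s : ℝ, 0 ≤ s → g s = genFun P (x s) := by
    intro s hs; simp [hgdef, max_eq_left hs]
  have hganti : Antitone g := by
    intro a b hab
    exact genFun_mono hP hsum (hx0' _ (hmax b))
      (hanti (hmax a) (hmax b) (max_le_max hab le_rfl)) (hx1 _ (hmax a))
  have hg0 : ∀ s, 0 ≤ g s := fun s => genFun_nonneg hP (hx0' _ (hmax s))
  have hg1 : ∀ s, g s ≤ 1 := by
    intro s
    have := genFun_mono hP hsum (hx0' _ (hmax s)) (hx1 _ (hmax s)) le_rfl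
    rwa [genFun_one hone] at this
  have hgρ : ∀ s, ρ ≤ g s := by
    intro s
    have := genFun_mono hP hsum hρ0 (hxρ _ (hmax s)) (hx1 _ (hmax s))
    rwa [hfix] at this
  have hgx : ∀ s : ℝ, 0 ≤ s → g s ≤ x s := by
    intro s hs
    rw [hg_eq s hs]
    exact genFun_le_self hP hsum hρ0 hρ1 hfix hone (hxρ s hs) (hx1 s hs)
  have hgm : Measurable g := hganti.measurable
  -- the integrand hfun
  set hfun : ℝ → ℝ := fun s => g s * Real.exp (-s) with hhdef
  have hhm : Measurable hfun := hgm.mul (Real.continuous_exp.comp continuous_neg).measurable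
  have hh0 : ∀ s, 0 ≤ hfun s := fun s => mul_nonneg (hg0 s) (Real.exp_pos _).le
  have hhle : ∀ s, hfun s ≤ Real.exp (-s) := by
    intro s
    have := mul_le_mul_of_nonneg_right (hg1 s) (Real.exp_pos (-s)).le
    simpa [hhdef] using this
  have hexp_int : ∀ u : ℝ, IntegrableOn (fun s => Real.exp (-s)) (Ioi u) := by
    intro u
    have := exp_neg_integrableOn_Ioi u one_pos
    simpa using this
  have hhint : ∀ u : ℝ, IntegrableOn hfun (Ioi u) := by
    intro u
    refine Integrable.mono' (hexp_int u) (hhm.aestronglyMeasurable.restrict) ?_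
    exact Filter.Eventually.of_forall fun s => by
      rw [Real.norm_eq_abs, abs_of_nonneg (hh0 s)]; exact hhle s
  -- the function G
  set G : ℝ → ℝ := fun u => ∫ s in Ioi u, hfun s with hGdef
  have hIexp : ∀ u : ℝ, ∫ s in Ioi u, Real.exp (-s) = Real.exp (-u) :=
    fun u => integral_exp_neg_Ioi u
  have hG0 : ∀ u, 0 ≤ G u :=
    fun u => setIntegral_nonneg measurableSet_Ioi (fun s _ => hh0 s)
  have hGsplit : ∀ u b : ℝ, u ≤ b → G u = (∫ s in Ioc u b, hfun s) + G b := by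
    intro u b hub
    rw [hGdef]
    simp only
    rw [← Set.Ioc_union_Ioi_eq_Ioi hub,
      setIntegral_union Set.Ioc_disjoint_Ioi_same measurableSet_Ioi
        ((hhint u).mono_set Set.Ioc_subset_Ioi_self) (hhint b)]
  have hIocexp : ∀ u b : ℝ, u ≤ b →
      ∫ s in Ioc u b, Real.exp (-s) = Real.exp (-u) - Real.exp (-b) := by
    intro u b hub
    have := setIntegral_union (f := fun s => Real.exp (-s)) (μ := volume)
      Set.Ioc_disjoint_Ioi_same measurableSet_Ioi
      ((hexp_int u).mono_set Set.Ioc_subset_Ioi_self) (hexp_int b)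
    rw [Set.Ioc_union_Ioi_eq_Ioi hub, hIexp u, hIexp b] at this
    linarith
  have hGge : ∀ u : ℝ, ρ * Real.exp (-u) ≤ G u := by
    intro u
    have hmono : ∫ s in Ioi u, ρ * Real.exp (-s) ≤ G u := by
      refine setIntegral_mono_on ((hexp_int u).const_mul ρ) (hhint u) measurableSet_Ioi ?_
      intro s _
      exact mul_le_mul_of_nonneg_right (hgρ s) (Real.exp_pos _).le
    rwa [MeasureTheory.integral_const_mul, hIexp u] at hmono
  -- the key upper bound on G by splitting
  have hGbound : ∀ u b c₁ c₂ : ℝ, u ≤ b → (∀ s ∈ Ioc u b, g s ≤ c₁) →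
      (∀ s ∈ Ioi b, g s ≤ c₂) →
      G u ≤ c₁ * (Real.exp (-u) - Real.exp (-b)) + c₂ * Real.exp (-b) := by
    intro u b c₁ c₂ hub h1 h2
    have e1 : (∫ s in Ioc u b, hfun s) ≤ ∫ s in Ioc u b, c₁ * Real.exp (-s) := by
      refine setIntegral_mono_on ((hhint u).mono_set Set.Ioc_subset_Ioi_self)
        (((hexp_int u).mono_set Set.Ioc_subset_Ioi_self).const_mul c₁)
        measurableSet_Ioc ?_
      intro s hs
      exact mul_le_mul_of_nonneg_right (h1 s hs) (Real.exp_pos _).le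
    have e2 : G b ≤ ∫ s in Ioi b, c₂ * Real.exp (-s) := by
      refine setIntegral_mono_on (hhint b) ((hexp_int b).const_mul c₂) measurableSet_Ioi ?_
      intro s hs
      exact mul_le_mul_of_nonneg_right (h2 s hs) (Real.exp_pos _).le
    rw [MeasureTheory.integral_const_mul, hIocexp u b hub] at e1
    rw [MeasureTheory.integral_const_mul, hIexp b] at e2
    have := hGsplit u b hub
    linarith
  have hGle : ∀ u : ℝ, G u ≤ Real.exp (-u) := by
    intro u
    have := hGbound u u 1 1 le_rfl (fun s hs => hg1 s) (fun s hs => hg1 s)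
    simpa using this
  -- tail bound from convergence
  have htail : ∀ c : ℝ, ρ < c → ∃ S : ℝ, 0 ≤ S ∧ ∀ s, S ≤ s → g s ≤ c := by
    intro c hc
    obtain ⟨S₀, hS₀⟩ := Filter.eventually_atTop.1 (hlim.eventually_lt_const hc)
    refine ⟨max S₀ 0, le_max_right _ _, fun s hs => ?_⟩
    have hs0 : (0:ℝ) ≤ s := le_trans (le_max_right _ _) hs
    exact (hgx s hs0).trans (hS₀ s (le_trans (le_max_left _ _) hs)).le
  -- interval integrability and continuity of G
  have hhii : ∀ a b : ℝ, IntervalIntegrable hfun volume a b := by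
    intro a b
    rw [intervalIntegrable_iff]
    refine (hhint (a ⊓ b - 1)).mono_set fun s hs => ?_
    exact Set.mem_Ioi.2 (by linarith [hs.1])
  have hGprim : ∀ u : ℝ, G u = G 0 - ∫ v in (0:ℝ)..u, hfun v := by
    intro u
    rcases le_total (0:ℝ) u with h | h
    · rw [intervalIntegral.integral_of_le h]
      have := hGsplit 0 u h
      linarith
    · rw [intervalIntegral.integral_symm, intervalIntegral.integral_of_le h]
      have := hGsplit u 0 h
      linarith
  have hGcont : Continuous G := by
    have hc : Continuous fun u : ℝ => G 0 - ∫ v in (0:ℝ)..u, hfun v :=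
      continuous_const.sub (intervalIntegral.continuous_primitive hhii 0)
    exact hc.congr fun u => (hGprim u).symm
  have hHcont : Continuous fun u : ℝ => Real.exp ((lam + 1) * u) * G u :=
    (Real.continuous_exp.comp (continuous_const.mul continuous_id)).mul hGcont
  have hrel3 : ∀ u : ℝ, Real.exp ((lam + 1) * u) * Real.exp (-u) = Real.exp (lam * u) := by
    intro u; rw [← Real.exp_add]; ring_nf
  -- rewrite the fixed point equation in terms of G
  have hF : ∀ t : ℝ, 0 ≤ t → x t = Real.exp (-(lam * t)) + lam * Real.exp (-(lam * t)) *
      ∫ u in (0:ℝ)..t, Real.exp ((lam + 1) * u) * G u := by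
    intro t ht
    rw [heq t ht]
    have hinner : ∀ u : ℝ, 0 ≤ u →
        (∫ s in Ioi u, genFun P (x s) * Real.exp (-s)) = G u := by
      intro u hu
      rw [hGdef]
      refine setIntegral_congr_fun measurableSet_Ioi (fun s hs => ?_)
      simp only [hhdef]
      rw [hg_eq s (hu.trans (le_of_lt hs))]
    congr 1
    congr 1
    refine intervalIntegral.integral_congr fun u hu => ?_
    rw [Set.uIcc_of_le ht] at hu
    rw [hinner u hu.1]
  -- lower bound: ρ + (1-ρ) e^{-λ t} ≤ x t for t ≥ 0
  have hlow : ∀ t : ℝ, 0 ≤ t → ρ + (1 - ρ) * Real.exp (-(lam * t)) ≤ x t := by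
    intro t ht
    have hmono : (∫ u in (0:ℝ)..t, ρ * Real.exp (lam * u)) ≤
        ∫ u in (0:ℝ)..t, Real.exp ((lam + 1) * u) * G u := by
      have hcont1 : Continuous fun u : ℝ => ρ * Real.exp (lam * u) :=
        continuous_const.mul (Real.continuous_exp.comp (continuous_const.mul continuous_id))
      refine intervalIntegral.integral_mono_on ht (hcont1.intervalIntegrable 0 t)
        (hHcont.intervalIntegrable 0 t) fun u hu => ?_
      have h1 := mul_le_mul_of_nonneg_left (hGge u) (Real.exp_pos ((lam + 1) * u)).le
      have h3 : ρ * Real.exp (lam * u)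
          = Real.exp ((lam + 1) * u) * (ρ * Real.exp (-u)) := by
        rw [mul_left_comm, hrel3 u]
      exact h3.le.trans h1
    have hval : (∫ u in (0:ℝ)..t, ρ * Real.exp (lam * u)) =
        ρ * ((Real.exp (lam * t) - 1) / lam) := by
      rw [intervalIntegral.integral_const_mul, integral_exp_mul_aux hlam0.ne']
      simp
    rw [hF t ht]
    have hrel : Real.exp (-(lam * t)) * Real.exp (lam * t) = 1 := by
      rw [← Real.exp_add]; simp
    have hE1 : 0 < Real.exp (-(lam * t)) := Real.exp_pos _
    rw [hval] at hmono
    have h2 := mul_le_mul_of_nonneg_left hmono (mul_nonneg hlam0.le hE1.le)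
    have heq2 : lam * Real.exp (-(lam * t)) * (ρ * ((Real.exp (lam * t) - 1) / lam))
        = ρ * (Real.exp (-(lam * t)) * Real.exp (lam * t)) - ρ * Real.exp (-(lam * t)) := by
      field_simp
    rw [hrel] at heq2
    linarith [h2, heq2]
  have hlow' : ∀ t : ℝ, 0 ≤ t → ρ < x t := by
    intro t ht
    have h1 := hlow t ht
    have h2 : 0 < (1 - ρ) * Real.exp (-(lam * t)) :=
      mul_pos (by linarith) (Real.exp_pos _)
    linarith
  -- strict upper bound: x t < 1 for t > 0
  have hupp : ∀ t : ℝ, 0 < t → x t < 1 := by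
    intro t ht
    have ht' := ht.le
    obtain ⟨S, hS0, hSg⟩ := htail ((1 + ρ) / 2) (by linarith)
    set b := max t S with hb
    have htb : t ≤ b := le_max_left _ _
    have hSb : S ≤ b := le_max_right _ _
    have hεpos : 0 < (1 - (1 + ρ) / 2) * Real.exp (-b) :=
      mul_pos (by linarith) (Real.exp_pos _)
    have hGb : ∀ u ∈ Icc (0:ℝ) t, Real.exp ((lam + 1) * u) * G u ≤
        Real.exp (lam * u) - ((1 - (1 + ρ) / 2) * Real.exp (-b)) * Real.exp ((lam + 1) * u) := by
      intro u hu
      have h1 : G u ≤ 1 * (Real.exp (-u) - Real.exp (-b)) + ((1 + ρ) / 2) * Real.exp (-b) :=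
        hGbound u b 1 ((1 + ρ) / 2) (hu.2.trans htb) (fun s _ => hg1 s)
          (fun s hs => hSg s (hSb.trans (le_of_lt hs)))
      have h2 := mul_le_mul_of_nonneg_left h1 (Real.exp_pos ((lam + 1) * u)).le
      nlinarith [h2, hrel3 u]
    have hcontA : Continuous fun u : ℝ => Real.exp (lam * u) :=
      Real.continuous_exp.comp (continuous_const.mul continuous_id)
    have hcontB : Continuous fun u : ℝ =>
        ((1 - (1 + ρ) / 2) * Real.exp (-b)) * Real.exp ((lam + 1) * u) :=
      continuous_const.mul (Real.continuous_exp.comp (continuous_const.mul continuous_id))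
    have hIb : (∫ u in (0:ℝ)..t, Real.exp ((lam + 1) * u) * G u) ≤
        (Real.exp (lam * t) - 1) / lam -
          ((1 - (1 + ρ) / 2) * Real.exp (-b)) * ((Real.exp ((lam + 1) * t) - 1) / (lam + 1)) := by
      have hm := intervalIntegral.integral_mono_on (μ := volume) ht' (hHcont.intervalIntegrable 0 t)
        ((hcontA.sub hcontB).intervalIntegrable 0 t) hGb
      have hval : (∫ u in (0:ℝ)..t, (Real.exp (lam * u) -
          ((1 - (1 + ρ) / 2) * Real.exp (-b)) * Real.exp ((lam + 1) * u)))
          = (Real.exp (lam * t) - 1) / lam -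
            ((1 - (1 + ρ) / 2) * Real.exp (-b)) * ((Real.exp ((lam + 1) * t) - 1) / (lam + 1)) := by
        rw [intervalIntegral.integral_sub (hcontA.intervalIntegrable 0 t)
            (hcontB.intervalIntegrable 0 t),
          intervalIntegral.integral_const_mul, integral_exp_mul_aux hlam0.ne',
          integral_exp_mul_aux (by linarith : lam + 1 ≠ 0)]
        simp
      rw [← hval]
      exact hm
    have hE1 : 0 < Real.exp (-(lam * t)) := Real.exp_pos _
    have hrel : Real.exp (-(lam * t)) * Real.exp (lam * t) = 1 := by
      rw [← Real.exp_add]; simp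
    have hE3 : 1 < Real.exp ((lam + 1) * t) := by
      rw [Real.one_lt_exp_iff]
      exact mul_pos (by linarith) ht
    rw [hF t ht']
    have h2 := mul_le_mul_of_nonneg_left hIb (mul_nonneg hlam0.le hE1.le)
    have hd1 : lam * Real.exp (-(lam * t)) * ((Real.exp (lam * t) - 1) / lam)
        = Real.exp (-(lam * t)) * Real.exp (lam * t) - Real.exp (-(lam * t)) := by
      field_simp
    rw [hrel] at hd1
    have hd2 : 0 < lam * Real.exp (-(lam * t)) *
        (((1 - (1 + ρ) / 2) * Real.exp (-b)) * ((Real.exp ((lam + 1) * t) - 1) / (lam + 1))) := by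
      have hq : 0 < (Real.exp ((lam + 1) * t) - 1) / (lam + 1) :=
        div_pos (by linarith) (by linarith)
      exact mul_pos (mul_pos hlam0 hE1) (mul_pos hεpos hq)
    nlinarith [h2, hd1, hd2]
  -- the derivative formula
  have hmain : ∀ t : ℝ, 0 ≤ t →
      derivWithin x (Set.Ici 0) t = -lam * x t + lam * Real.exp t * G t := by
    intro t ht
    have hI : HasDerivAt (fun r => ∫ u in (0:ℝ)..r, Real.exp ((lam + 1) * u) * G u)
        (Real.exp ((lam + 1) * t) * G t) t :=
      intervalIntegral.integral_hasDerivAt_right (hHcont.intervalIntegrable 0 t)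
        (hHcont.stronglyMeasurableAtFilter volume (nhds t)) hHcont.continuousAt
    have h1 : HasDerivAt (fun r : ℝ => -(lam * r)) (-lam) t := by
      simpa using ((hasDerivAt_id t).const_mul lam).fun_neg
    have hE : HasDerivAt (fun r : ℝ => Real.exp (-(lam * r)))
        (Real.exp (-(lam * t)) * -lam) t := h1.exp
    have hFd := hE.add ((hE.const_mul lam).mul hI)
    have hrel4 : Real.exp (-(lam * t)) * Real.exp ((lam + 1) * t) = Real.exp t := by
      rw [← Real.exp_add]; ring_nf
    have hxF : ∀ u ∈ Set.Ici (0:ℝ), x u = Real.exp (-(lam * u)) +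
        lam * Real.exp (-(lam * u)) *
        ∫ v in (0:ℝ)..u, Real.exp ((lam + 1) * v) * G v := fun u hu => hF u hu
    have hDx : HasDerivWithinAt x (-lam * x t + lam * Real.exp t * G t) (Set.Ici 0) t := by
      have h2 := (hFd.hasDerivWithinAt).congr hxF (hxF t ht)
      refine h2.congr_deriv ?_
      rw [hF t ht]
      linear_combination (lam * G t) * hrel4
    exact hDx.derivWithin (uniqueDiffOn_Ici 0 t ht)
  refine ⟨fun t ht => ⟨hlow' t ht.le, hupp t ht⟩, fun t ht => ?_⟩
  rw [hmain t ht]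
  constructor
  · nlinarith [mul_nonneg (mul_nonneg hlam0.le (Real.exp_pos t).le) (hG0 t),
      hx1 t ht, hx0' t ht]
  · obtain ⟨S, hS0, hSg⟩ := htail ((ρ + x t) / 2) (by nlinarith [hlow' t ht])
    set b := max t S with hb
    have htb : t ≤ b := le_max_left _ _
    have hSb : S ≤ b := le_max_right _ _
    have h1 : G t ≤ x t * (Real.exp (-t) - Real.exp (-b)) + ((ρ + x t) / 2) * Real.exp (-b) := by
      refine hGbound t b (x t) _ htb (fun s hs => ?_)
        (fun s hs => hSg s (hSb.trans (le_of_lt hs)))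
      exact (hgx s (ht.trans hs.1.le)).trans (hanti ht (ht.trans hs.1.le) hs.1.le)
    have hrel5 : Real.exp t * Real.exp (-t) = 1 := by rw [← Real.exp_add]; simp
    have hxt := hlow' t ht
    have h2 := mul_le_mul_of_nonneg_left h1 (Real.exp_pos t).le
    have h3 : x t * (Real.exp t * Real.exp (-t)) = x t := by rw [hrel5]; ring
    have hD : Real.exp t * G t < x t := by
      nlinarith [h2, h3, mul_pos (Real.exp_pos t) (Real.exp_pos (-b)), hxt]
    nlinarith [hD, hlam0]
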